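/- Fix b ∈ ℝ and s > 0. The function t ↦ ∫₀^s ψ_{s+t}(y) dy is strictly decreasing on (0, ∞). -/

import Mathlib

open Real MeasureTheory Set Filter

/-- Standard Gaussian density φ(z) = (1/√(2π)) e^{−z²/2}. -/
noncomputable def gaussPdf (z : ℝ) : ℝ := (1 / Real.sqrt (2 * π)) * Real.exp (-z ^ 2 / 2)

/-- Standard Gaussian distribution function Φ(y) = ∫_{−∞}^y φ(z) dz. -/
noncomputable def gaussCdf (y : ℝ) : ℝ := ∫ z in Set.Iio y, gaussPdf z

/-- ψ_t(u) = (e^{−b²u/2}/(π√(u(t−u)))) · [ e^{−b²(t−u)/2}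
      + (b/2)·√(2π(t−u)) · (2Φ(b√(t−u)) − 1) ]. -/
noncomputable def psi (b t u : ℝ) : ℝ :=
  (Real.exp (-b ^ 2 * u / 2) / (π * Real.sqrt (u * (t - u)))) *
    (Real.exp (-b ^ 2 * (t - u) / 2) +
      (b / 2) * Real.sqrt (2 * π * (t - u)) *
        (2 * gaussCdf (b * Real.sqrt (t - u)) - 1))

/-- Inverse Gaussian first-passage density f_{τ₁}(t) = (|a−x|/t^{3/2}) φ((a+bt−x)/√t). -/
noncomputable def invGaussPdf (a x b t : ℝ) : ℝ :=
  (|a - x| / t ^ ((3 : ℝ) / 2)) * gaussPdf ((a + b * t - x) / Real.sqrt t)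

lemma gaussPdf_cont : Continuous gaussPdf := by
  unfold gaussPdf; fun_prop

lemma gaussPdf_integrable : Integrable gaussPdf := by
  have h : Integrable (fun z : ℝ => Real.exp (-(1/2 : ℝ) * z ^ 2)) :=
    integrable_exp_neg_mul_sq (by norm_num)
  have := h.const_mul (1 / Real.sqrt (2 * π))
  refine this.congr (Eventually.of_forall fun z => ?_)
  unfold gaussPdf; ring_nf

lemma gaussCdf_eq (y : ℝ) : gaussCdf y = gaussCdf 0 + ∫ z in (0:ℝ)..y, gaussPdf z := by
  unfold gaussCdf
  rw [← MeasureTheory.integral_Iic_eq_integral_Iio, ← MeasureTheory.integral_Iic_eq_integral_Iio,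
    ← intervalIntegral.integral_Iic_sub_Iic gaussPdf_integrable.integrableOn
      gaussPdf_integrable.integrableOn]
  ring

lemma gaussCdf_hasDeriv (x : ℝ) : HasDerivAt gaussCdf (gaussPdf x) x := by
  have h : HasDerivAt (fun u => ∫ z in (0:ℝ)..u, gaussPdf z) (gaussPdf x) x :=
    intervalIntegral.integral_hasDerivAt_right gaussPdf_integrable.intervalIntegrable
      (gaussPdf_cont.stronglyMeasurable.stronglyMeasurableAtFilter) gaussPdf_cont.continuousAt
  have := (h.const_add (gaussCdf 0))
  refine this.congr_of_eventuallyEq (Eventually.of_forall fun y => (gaussCdf_eq y))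

lemma gaussCdf_cont : Continuous gaussCdf :=
  continuous_iff_continuousAt.2 fun x => (gaussCdf_hasDeriv x).continuousAt

/-- auxiliary function -/
noncomputable def haux (b v : ℝ) : ℝ :=
  Real.exp (-b ^ 2 * v / 2) / Real.sqrt v +
    (b / 2) * Real.sqrt (2 * π) * (2 * gaussCdf (b * Real.sqrt v) - 1)

lemma haux_hasDeriv (b : ℝ) {v : ℝ} (hv : 0 < v) :
    HasDerivAt (haux b) (-Real.exp (-b ^ 2 * v / 2) / (2 * v * Real.sqrt v)) v := by
  have hsv : 0 < Real.sqrt v := Real.sqrt_pos.2 hv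
  have hsq : HasDerivAt Real.sqrt (1 / (2 * Real.sqrt v)) v := Real.hasDerivAt_sqrt hv.ne'
  have hexp : HasDerivAt (fun v => Real.exp (-b ^ 2 * v / 2)) 
      ((-b^2/2) * Real.exp (-b ^ 2 * v / 2)) v := by
    have h1 : HasDerivAt (fun v : ℝ => -b ^ 2 * v / 2) (-b^2/2) v := by
      simpa using ((hasDerivAt_id v).const_mul (-b^2)).div_const 2
    simpa [mul_comm] using h1.exp
  have hinv : HasDerivAt (fun v => (Real.sqrt v)⁻¹)
      (-(1 / (2 * Real.sqrt v)) / (Real.sqrt v ^ 2)) v := hsq.inv hsv.ne'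
  have hterm1 : HasDerivAt (fun v => Real.exp (-b ^ 2 * v / 2) / Real.sqrt v)
      ((-b^2/2) * Real.exp (-b ^ 2 * v / 2) * (Real.sqrt v)⁻¹ +
        Real.exp (-b ^ 2 * v / 2) * (-(1 / (2 * Real.sqrt v)) / (Real.sqrt v ^ 2))) v := by
    simpa [div_eq_mul_inv] using hexp.fun_mul hinv
  have hbsq : HasDerivAt (fun v => b * Real.sqrt v) (b * (1 / (2 * Real.sqrt v))) v :=
    hsq.const_mul b
  have hcdf : HasDerivAt (fun v => gaussCdf (b * Real.sqrt v))
      (gaussPdf (b * Real.sqrt v) * (b * (1 / (2 * Real.sqrt v)))) v :=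
    (gaussCdf_hasDeriv (b * Real.sqrt v)).comp (h₂ := gaussCdf) v hbsq
  have hterm2 : HasDerivAt (fun v => (b / 2) * Real.sqrt (2 * π) * (2 * gaussCdf (b * Real.sqrt v) - 1))
      ((b / 2) * Real.sqrt (2 * π) * (2 * (gaussPdf (b * Real.sqrt v) * (b * (1 / (2 * Real.sqrt v)))))) v := by
    exact (((hcdf.const_mul 2).sub_const 1).const_mul _)
  have := hterm1.add hterm2
  refine HasDerivAt.congr_deriv this ?_
  symm
  have hpdf : gaussPdf (b * Real.sqrt v) = (1 / Real.sqrt (2 * π)) * Real.exp (-b ^ 2 * v / 2) := by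
    unfold gaussPdf
    congr 1
    rw [mul_pow, Real.sq_sqrt hv.le]
    ring_nf
  rw [hpdf]
  have h2pi : Real.sqrt (2 * π) ≠ 0 := by positivity
  have hv2 : Real.sqrt v ^ 2 = v := Real.sq_sqrt hv.le
  field_simp
  nlinarith [Real.sq_sqrt hv.le, Real.sq_sqrt Real.two_pi_pos.le, sq_nonneg (Real.sqrt v), hsv]

lemma haux_strictAnti (b : ℝ) : StrictAntiOn (haux b) (Set.Ioi 0) := by
  refine strictAntiOn_of_deriv_neg (convex_Ioi 0) ?_ ?_
  · intro x hx
    exact ((haux_hasDeriv b (by exact hx : (0:ℝ) < x)).continuousAt).continuousWithinAt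
  · intro x hx
    rw [interior_Ioi] at hx
    rw [(haux_hasDeriv b hx).deriv]
    have hx' : (0:ℝ) < x := hx
    have h1 : 0 < Real.sqrt x := Real.sqrt_pos.2 hx'
    have h2 := Real.exp_pos (-b ^ 2 * x / 2)
    apply div_neg_of_neg_of_pos
    · linarith
    · positivity

lemma psi_eq {b t u : ℝ} (hu : 0 < u) (htu : u < t) :
    psi b t u = (Real.exp (-b ^ 2 * u / 2) / (π * Real.sqrt u)) * haux b (t - u) := by
  have hv : (0:ℝ) < t - u := by linarith
  have hsu : 0 < Real.sqrt u := Real.sqrt_pos.2 hu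
  have hsv : 0 < Real.sqrt (t - u) := Real.sqrt_pos.2 hv
  unfold psi haux
  rw [Real.sqrt_mul hu.le, show (2 * π * (t - u)) = (2 * π) * (t - u) by ring,
    Real.sqrt_mul (by positivity)]
  have hπ : (0:ℝ) < π := Real.pi_pos
  field_simp

lemma psi_pointwise_lt {b s y t₁ t₂ : ℝ} (hy : 0 < y) (hys : y < s)
    (ht1 : 0 < t₁) (h12 : t₁ < t₂) : psi b (s + t₂) y < psi b (s + t₁) y := by
  rw [psi_eq hy (by linarith), psi_eq hy (by linarith)]
  have hpre : 0 < Real.exp (-b ^ 2 * y / 2) / (π * Real.sqrt y) := by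
    have := Real.pi_pos
    have := Real.sqrt_pos.2 hy
    positivity
  have h1 : (s + t₁ - y) ∈ Set.Ioi (0:ℝ) := by simp; linarith
  have h2 : (s + t₂ - y) ∈ Set.Ioi (0:ℝ) := by simp; linarith
  exact mul_lt_mul_of_pos_left (haux_strictAnti b h1 h2 (by linarith)) hpre

lemma psi_measurable (b t : ℝ) : Measurable (psi b t) := by
  unfold psi
  have := gaussCdf_cont
  fun_prop

lemma psi_intervalIntegrable {b t s : ℝ} (hs : 0 < s) (hts : s < t) :
    IntervalIntegrable (psi b t) volume 0 s := by
  set g : ℝ → ℝ := fun u => Real.exp (-b ^ 2 * u / 2) / (π * Real.sqrt (t - u)) *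
    (Real.exp (-b ^ 2 * (t - u) / 2) +
      (b / 2) * Real.sqrt (2 * π * (t - u)) * (2 * gaussCdf (b * Real.sqrt (t - u)) - 1)) with hg
  have hgcont : ContinuousOn g (Set.Icc 0 s) := by
    have hπ : (0:ℝ) < π := Real.pi_pos
    apply ContinuousOn.mul
    · apply ContinuousOn.div
      · fun_prop
      · fun_prop
      · intro u hu
        have : 0 < t - u := by simp at hu; linarith [hu.2]
        have := Real.sqrt_pos.2 this
        positivity
    · have := gaussCdf_cont
      fun_prop
  obtain ⟨M, hM⟩ := (isCompact_Icc).exists_bound_of_continuousOn hgcont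
  have hMint : IntervalIntegrable (fun u : ℝ => M * u ^ (-(1/2) : ℝ)) volume 0 s :=
    (intervalIntegral.intervalIntegrable_rpow' (by norm_num)).const_mul M
  refine hMint.mono_fun ((psi_measurable b t).aestronglyMeasurable.restrict) ?_
  rw [Set.uIoc_of_le hs.le]
  refine (MeasureTheory.ae_restrict_iff' measurableSet_Ioc).2 (Eventually.of_forall ?_)
  intro u hu
  have hu0 : 0 < u := hu.1
  have hv : 0 < t - u := by linarith [hu.2]
  have hsu : 0 < Real.sqrt u := Real.sqrt_pos.2 hu0
  have hsv : 0 < Real.sqrt (t - u) := Real.sqrt_pos.2 hv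
  have hpsig : psi b t u = g u * (Real.sqrt u)⁻¹ := by
    unfold psi; rw [hg]
    simp only
    rw [Real.sqrt_mul hu0.le, mul_comm (Real.sqrt u), ← mul_assoc, ← div_div,
      div_eq_mul_inv _ (Real.sqrt u)]
    ring
  have hrpow : u ^ (-(1/2) : ℝ) = (Real.sqrt u)⁻¹ := by
    rw [Real.rpow_neg hu0.le, Real.sqrt_eq_rpow]
  have hgu : |g u| ≤ M := hM u ⟨hu0.le, hu.2⟩
  have hM0 : 0 ≤ M := (abs_nonneg _).trans hgu
  simp only [Real.norm_eq_abs, hpsig, abs_mul, hrpow]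
  rw [abs_inv, abs_of_nonneg hsu.le]
  rw [abs_of_nonneg hM0]
  exact mul_le_mul_of_nonneg_right hgu (by positivity)

theorem stmt4 (b s : ℝ) (hs : 0 < s) :
    StrictAntiOn (fun t => ∫ y in (0 : ℝ)..s, psi b (s + t) y) (Set.Ioi 0) := by

  intro t₁ ht₁ t₂ ht₂ h12
  simp only [Set.mem_Ioi] at ht₁ ht₂
  have hI1 : IntervalIntegrable (psi b (s + t₁)) volume 0 s :=
    psi_intervalIntegrable hs (by linarith)
  have hI2 : IntervalIntegrable (psi b (s + t₂)) volume 0 s :=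
    psi_intervalIntegrable hs (by linarith)
  have key : 0 < ∫ y in (0:ℝ)..s, (psi b (s + t₁) y - psi b (s + t₂) y) := by
    refine intervalIntegral.intervalIntegral_pos_of_pos_on (hI1.sub hI2) ?_ hs
    intro y hy
    exact sub_pos.2 (psi_pointwise_lt hy.1 hy.2 ht₁ h12)
  rw [intervalIntegral.integral_sub hI1 hI2] at key
  simp only
  linarith
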